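/- For each nonempty proper face F of B∞ⁿ let α_F > 0 be given, and set y_F = α_F·c_F and y*_F = α_F⁻¹·c_F/(n − dim F). Let Q = ⋃_𝔽 conv{0, y_{F₀}, y_{F₁}, …, y_{F_{n−1}}} and Q' = ⋃_𝔽 conv{0, y*_{F₀}, y*_{F₁}, …, y*_{F_{n−1}}}, where the unions run over all flags 𝔽 = (F₀ ⊂ ⋯ ⊂ F_{n−1}) of faces of the cube. Then volₙ(Q)·volₙ(Q') ≥ volₙ(B∞ⁿ)·volₙ(B₁ⁿ) = 4ⁿ/n!. -/

import Mathlib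

open MeasureTheory RealInnerProductSpace ENNReal Pointwise

noncomputable section

/-- Nonempty proper faces of the cube `B∞ⁿ`, encoded by nonzero sign vectors
`ε ∈ {−1,0,1}ⁿ`: the face is `{x ∈ B∞ⁿ : xᵢ = εᵢ whenever εᵢ ≠ 0}`. -/
def Face (n : ℕ) : Type := {ε : Fin n → SignType // ε ≠ 0}

instance (n : ℕ) : Fintype (Face n) := Subtype.fintype _

/-- The center `c_F` of the face with sign vector `ε` is `ε` itself (as a real vector). -/
def ctr {n : ℕ} (F : Face n) : EuclideanSpace ℝ (Fin n) := WithLp.toLp 2 (fun i => (F.1 i : ℝ))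

/-- The dimension of a face: the number of zero coordinates of its sign vector. -/
def faceDim {n : ℕ} (F : Face n) : ℕ := (Finset.univ.filter fun i => F.1 i = 0).card

/-- Sign vector of the `j`-th member `F_j` of the flag of faces determined by the
vertex sign pattern `s` and the zeroing order `σ`: coordinate `i` is zeroed at step `σ i`. -/
def flagVec {n : ℕ} (s : Fin n → Bool) (σ : Equiv.Perm (Fin n)) (j : Fin n) :
    Fin n → SignType :=
  fun i => if (σ i : ℕ) < (j : ℕ) then 0 else if s i then 1 else -1

theorem flagVec_ne_zero {n : ℕ} (s : Fin n → Bool) (σ : Equiv.Perm (Fin n)) (j : Fin n) :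
    flagVec s σ j ≠ 0 := by
  intro h
  have h1 := congrFun h (σ.symm j)
  simp only [flagVec, Equiv.apply_symm_apply, lt_irrefl, if_false, Pi.zero_apply] at h1
  by_cases hs : s (σ.symm j) <;> simp [hs] at h1

/-- The `j`-th member of the flag determined by `(s, σ)`, as a face of the cube. -/
def flagFace {n : ℕ} (s : Fin n → Bool) (σ : Equiv.Perm (Fin n)) (j : Fin n) : Face n :=
  ⟨flagVec s σ j, flagVec_ne_zero s σ j⟩

/-- The star-shaped polytope `⋃_𝔽 conv{0, x_{F₀}, …, x_{F_{n−1}}}`, the union running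
over all flags `𝔽 = (F₀ ⊂ ⋯ ⊂ F_{n−1})` of faces of the cube. -/
def starPoly {n : ℕ} (x : Face n → EuclideanSpace ℝ (Fin n)) :
    Set (EuclideanSpace ℝ (Fin n)) :=
  ⋃ s : Fin n → Bool, ⋃ σ : Equiv.Perm (Fin n),
    convexHull ℝ (insert 0 (Set.range fun j : Fin n => x (flagFace s σ j)))

namespace FlagAux

variable {n : ℕ}

abbrev E (n : ℕ) := EuclideanSpace ℝ (Fin n)

/-- The ±1 sign associated to a boolean. -/
def sgn (s : Fin n → Bool) (i : Fin n) : ℝ := if s i then 1 else -1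

lemma sgn_mul_self (s : Fin n → Bool) (i : Fin n) : sgn s i * sgn s i = 1 := by
  unfold sgn; split <;> norm_num

lemma abs_sgn (s : Fin n → Bool) (i : Fin n) : |sgn s i| = 1 := by
  unfold sgn; split <;> norm_num

lemma sgn_ne_zero (s : Fin n → Bool) (i : Fin n) : sgn s i ≠ 0 := by
  unfold sgn; split <;> norm_num

lemma ctr_flagFace_apply (s : Fin n → Bool) (σ : Equiv.Perm (Fin n)) (j i : Fin n) :
    ctr (flagFace s σ j) i = if (σ i : ℕ) < (j : ℕ) then 0 else sgn s i := by
  simp only [ctr, flagFace, flagVec, sgn, WithLp.ofLp_toLp]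
  split
  · rfl
  · split <;> simp

/-- The linear map sending the `j`-th basis vector to `v j`. -/
def mapOf (v : Fin n → E n) : E n →ₗ[ℝ] E n where
  toFun x := ∑ j, x j • v j
  map_add' x y := by
    simp only [PiLp.add_apply, add_smul]
    exact Finset.sum_add_distrib
  map_smul' c x := by
    simp only [PiLp.smul_apply, smul_eq_mul, RingHom.id_apply, Finset.smul_sum, smul_smul]

lemma mapOf_apply (v : Fin n → E n) (x : E n) (i : Fin n) :
    mapOf v x i = ∑ j, x j * v j i := by
  simp only [mapOf, LinearMap.coe_mk, AddHom.coe_mk]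
  rw [WithLp.ofLp_sum, Finset.sum_apply]
  simp [PiLp.smul_apply]

lemma mapOf_single (v : Fin n → E n) (j : Fin n) :
    mapOf v (EuclideanSpace.single j 1) = v j := by
  apply PiLp.ext
  intro i
  rw [mapOf_apply]
  rw [Finset.sum_eq_single j]
  · simp [EuclideanSpace.single_apply]
  · intro b _ hb
    simp [EuclideanSpace.single_apply, hb]
  · simp

lemma det_mapOf (v : Fin n → E n) :
    LinearMap.det (mapOf v) = Matrix.det (Matrix.of fun i j => v j i) := by
  rw [← LinearMap.det_toMatrix (EuclideanSpace.basisFun (Fin n) ℝ).toBasis]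
  congr 1
  ext i j
  rw [LinearMap.toMatrix_apply]
  have : ((EuclideanSpace.basisFun (Fin n) ℝ).toBasis : Fin n → E n) j
      = EuclideanSpace.single j 1 := by
    rw [OrthonormalBasis.coe_toBasis, EuclideanSpace.basisFun_apply]
  rw [this, mapOf_single]
  rfl

/-- The corner simplex. -/
def Δ (n : ℕ) : Set (E n) :=
  convexHull ℝ (insert 0 (Set.range fun i : Fin n => EuclideanSpace.single i (1 : ℝ)))

lemma corner_mem_Δ (x : E n) (h0 : ∀ i, 0 ≤ x i) (h1 : ∑ i, x i ≤ 1) : x ∈ Δ n := by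
  classical
  have hconv : Convex ℝ (Δ n) := convex_convexHull _ _
  have hx : x = ∑ o : Option (Fin n),
      (Option.elim o (1 - ∑ i, x i) fun i => x i) •
        (Option.elim o (0 : E n) fun i => EuclideanSpace.single i (1 : ℝ)) := by
    apply PiLp.ext
    intro k
    rw [WithLp.ofLp_sum, Finset.sum_apply]
    rw [Fintype.sum_option]
    simp only [Option.elim, PiLp.smul_apply, PiLp.zero_apply, smul_eq_mul, mul_zero, zero_add]
    rw [Finset.sum_eq_single k]
    · simp [EuclideanSpace.single_apply]
    · intro b _ hb
      simp [EuclideanSpace.single_apply, Ne.symm hb]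
    · simp
  rw [hx]
  apply hconv.sum_mem
  · intro o _
    cases o with
    | none => simpa using h1
    | some i => exact h0 i
  · rw [Fintype.sum_option]
    simp
  · intro o _
    cases o with
    | none => exact subset_convexHull _ _ (Set.mem_insert _ _)
    | some i => exact subset_convexHull _ _ (Set.mem_insert_iff.2 (Or.inr ⟨i, rfl⟩))

lemma image_Δ (v : Fin n → E n) :
    mapOf v '' Δ n = convexHull ℝ (insert 0 (Set.range v)) := by
  rw [Δ, LinearMap.image_convexHull]
  congr 1
  rw [Set.image_insert_eq, ← Set.range_comp]
  congr 1
  · exact map_zero _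
  · ext y
    constructor
    · rintro ⟨j, rfl⟩; exact ⟨j, (mapOf_single v j).symm ▸ rfl⟩
    · rintro ⟨j, rfl⟩; exact ⟨j, mapOf_single v j⟩

lemma volume_simplex (v : Fin n → E n) :
    volume (convexHull ℝ (insert 0 (Set.range v)))
      = ENNReal.ofReal |Matrix.det (Matrix.of fun i j => v j i)| * volume (Δ n) := by
  rw [← image_Δ, Measure.addHaar_image_linearMap, det_mapOf]

end FlagAux

namespace FlagAux

variable {n : ℕ}

/-- The closed cone of the flag `(s, σ)`. -/
def cone (s : Fin n → Bool) (σ : Equiv.Perm (Fin n)) : Set (E n) :=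
  {x | (∀ i, 0 ≤ sgn s i * x i) ∧
    ∀ i i', (σ i : ℕ) ≤ (σ i' : ℕ) → sgn s i * x i ≤ sgn s i' * x i'}

lemma convex_cone (s : Fin n → Bool) (σ : Equiv.Perm (Fin n)) : Convex ℝ (cone s σ) := by
  intro x hx y hy a b ha hb hab
  constructor
  · intro i
    have h1 := hx.1 i
    have h2 := hy.1 i
    have : sgn s i * (a • x + b • y) i = a * (sgn s i * x i) + b * (sgn s i * y i) := by
      simp only [PiLp.add_apply, PiLp.smul_apply, smul_eq_mul]; ring
    rw [this]
    positivity
  · intro i i' hle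
    have h1 := hx.2 i i' hle
    have h2 := hy.2 i i' hle
    have e1 : sgn s i * (a • x + b • y) i = a * (sgn s i * x i) + b * (sgn s i * y i) := by
      simp only [PiLp.add_apply, PiLp.smul_apply, smul_eq_mul]; ring
    have e2 : sgn s i' * (a • x + b • y) i' = a * (sgn s i' * x i') + b * (sgn s i' * y i') := by
      simp only [PiLp.add_apply, PiLp.smul_apply, smul_eq_mul]; ring
    rw [e1, e2]
    gcongr

lemma zero_mem_cone (s : Fin n → Bool) (σ : Equiv.Perm (Fin n)) : (0 : E n) ∈ cone s σ := by
  constructor <;> intros <;> simp [PiLp.zero_apply]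

lemma smul_ctr_mem_cone (s : Fin n → Bool) (σ : Equiv.Perm (Fin n)) (j : Fin n)
    {c : ℝ} (hc : 0 ≤ c) : c • ctr (flagFace s σ j) ∈ cone s σ := by
  have key : ∀ i, sgn s i * (c • ctr (flagFace s σ j)) i
      = if (σ i : ℕ) < (j : ℕ) then 0 else c := by
    intro i
    rw [PiLp.smul_apply, smul_eq_mul, ctr_flagFace_apply]
    split
    · ring
    · rw [show sgn s i * (c * sgn s i) = c * (sgn s i * sgn s i) by ring, sgn_mul_self, mul_one]
  constructor
  · intro i
    rw [key]
    split
    · exact le_refl 0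
    · exact hc
  · intro i i' hle
    rw [key, key]
    by_cases h : (σ i : ℕ) < (j : ℕ)
    · simp only [h, if_true]
      split
      · exact le_refl 0
      · exact hc
    · simp only [h, if_false]
      have : ¬ ((σ i' : ℕ) < (j : ℕ)) := fun hlt => h (lt_of_le_of_lt hle hlt)
      simp [this]

lemma simplex_subset_cone (s : Fin n → Bool) (σ : Equiv.Perm (Fin n))
    (β : Fin n → ℝ) (hβ : ∀ j, 0 ≤ β j) :
    convexHull ℝ (insert 0 (Set.range fun j => β j • ctr (flagFace s σ j))) ⊆ cone s σ := by
  apply convexHull_min _ (convex_cone s σ)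
  rintro y (rfl | ⟨j, rfl⟩)
  · exact zero_mem_cone s σ
  · exact smul_ctr_mem_cone s σ j (hβ j)

/-- A linear functional. -/
def lf (a b : ℝ) (i i' : Fin n) : E n →ₗ[ℝ] ℝ where
  toFun x := a * x i - b * x i'
  map_add' x y := by simp only [PiLp.add_apply]; ring
  map_smul' c x := by simp only [PiLp.smul_apply, smul_eq_mul, RingHom.id_apply]; ring

lemma null_of_lf (f : E n →ₗ[ℝ] ℝ) (hf : f ≠ 0) : volume {x : E n | f x = 0} = 0 := by
  have h1 : LinearMap.ker f ≠ ⊤ := by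
    intro h
    exact hf (LinearMap.ker_eq_top.1 h)
  have h2 := Measure.addHaar_submodule (volume : Measure (E n)) (LinearMap.ker f) h1
  have h3 : {x : E n | f x = 0} = ((LinearMap.ker f : Submodule ℝ (E n)) : Set (E n)) := by
    ext x; simp [LinearMap.mem_ker]
  rw [h3]
  exact h2

lemma exists_inversion {σ σ' : Equiv.Perm (Fin n)} (h : σ ≠ σ') :
    ∃ i i', σ i < σ i' ∧ σ' i' < σ' i := by
  by_contra hc
  push_neg at hc
  apply h
  have hmono : StrictMono fun a => σ' (σ.symm a) := by
    intro a b hab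
    have hne : σ.symm a ≠ σ.symm b := fun he => absurd (σ.symm.injective he ▸ rfl) hab.ne
    have h1 : σ (σ.symm a) < σ (σ.symm b) := by
      simpa using hab
    have h2 := hc (σ.symm a) (σ.symm b) h1
    exact lt_of_le_of_ne h2 (fun he => hne (σ'.injective he))
  have hsurj : Function.Surjective fun a => σ' (σ.symm a) :=
    (σ.symm.trans σ' : Equiv.Perm (Fin n)).surjective
  have hid : ∀ a, σ' (σ.symm a) = a := by
    have u := Subsingleton.elim (StrictMono.orderIsoOfSurjective _ hmono hsurj)
      (OrderIso.refl (Fin n))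
    intro a
    have := congrArg (fun (g : Fin n ≃o Fin n) => g a) u
    simp [StrictMono.orderIsoOfSurjective, OrderIso.Set.univ] at this
    exact this
  ext i
  have := hid (σ i)
  simp only [Equiv.symm_apply_apply] at this
  simp [this]

lemma cone_inter_null {p q : (Fin n → Bool) × Equiv.Perm (Fin n)} (hpq : p ≠ q) :
    volume (cone p.1 p.2 ∩ cone q.1 q.2) = 0 := by
  obtain ⟨s, σ⟩ := p
  obtain ⟨s', σ'⟩ := q
  by_cases hs : s = s'
  · subst hs
    have hσ : σ ≠ σ' := fun h => hpq (by rw [h])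
    obtain ⟨i, i', h1, h2⟩ := exists_inversion hσ
    have hii' : i ≠ i' := fun he => by subst he; exact absurd rfl h1.ne
    refine measure_mono_null ?_
      (?_ : volume {x : E n | lf (sgn s i) (sgn s i') i i' x = 0} = 0)
    · rintro x ⟨⟨_, hx2⟩, ⟨_, hy2⟩⟩
      have a1 := hx2 i i' (le_of_lt h1)
      have a2 := hy2 i' i (le_of_lt h2)
      have : sgn s i * x i = sgn s i' * x i' := le_antisymm a1 a2
      simp only [lf, LinearMap.coe_mk, AddHom.coe_mk, Set.mem_setOf_eq]
      linarith
    · apply null_of_lf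
      intro hzero
      have := congrArg (fun f => f (EuclideanSpace.single i 1)) (hzero : _)
      simp only [lf, LinearMap.coe_mk, AddHom.coe_mk, LinearMap.zero_apply] at this
      rw [EuclideanSpace.single_apply, EuclideanSpace.single_apply] at this
      simp [hii', Ne.symm hii'] at this
      exact sgn_ne_zero s i this
  · obtain ⟨i, hi⟩ := Function.ne_iff.1 hs
    refine measure_mono_null ?_ (?_ : volume {x : E n | lf 1 0 i i x = 0} = 0)
    · rintro x ⟨⟨hx1, _⟩, ⟨hy1, _⟩⟩
      have a1 := hx1 i
      have a2 := hy1 i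
      have hopp : sgn s i = - sgn s' i := by
        unfold sgn
        cases h1 : s i <;> cases h2 : s' i <;> simp_all
      rw [hopp] at a1
      have a2' : (0:ℝ) ≤ sgn s' i * x i := a2
      have hzero : sgn s' i * x i = 0 := le_antisymm (by linarith) a2'
      have hx0 : x i = 0 := by
        have h5 : x i = sgn s' i * (sgn s' i * x i) := by
          rw [← mul_assoc, sgn_mul_self, one_mul]
        rw [hzero, mul_zero] at h5
        exact h5
      simp only [lf, LinearMap.coe_mk, AddHom.coe_mk, Set.mem_setOf_eq, hx0]
      ring
    · apply null_of_lf
      intro hzero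
      have := congrArg (fun f => f (EuclideanSpace.single i 1)) (hzero : _)
      simp only [lf, LinearMap.coe_mk, AddHom.coe_mk, LinearMap.zero_apply] at this
      rw [EuclideanSpace.single_apply] at this
      simp at this

end FlagAux

namespace FlagAux

variable {n : ℕ}

lemma volume_flag_simplex (s : Fin n → Bool) (σ : Equiv.Perm (Fin n))
    (β : Fin n → ℝ) (hβ : ∀ j, 0 ≤ β j) :
    volume (convexHull ℝ (insert 0 (Set.range fun j => β j • ctr (flagFace s σ j))))
      = ENNReal.ofReal (∏ j, β j) * volume (Δ n) := by
  rw [volume_simplex]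
  congr 2
  set N : Matrix (Fin n) (Fin n) ℝ :=
    Matrix.of fun i j => if ((σ i : ℕ) < (j : ℕ)) then 0 else 1 with hN
  set N0 : Matrix (Fin n) (Fin n) ℝ :=
    Matrix.of fun i j => if ((i : ℕ) < (j : ℕ)) then 0 else 1 with hN0
  have h1 : Matrix.det (Matrix.of fun i j => (β j • ctr (flagFace s σ j) : E n) i)
      = (∏ i, sgn s i) * ((∏ j, β j) * Matrix.det N) := by
    rw [← Matrix.det_mul_row β N, ← Matrix.det_mul_column (sgn s)]
    congr 1
    ext i j
    simp only [Matrix.of_apply, PiLp.smul_apply, smul_eq_mul, hN]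
    rw [ctr_flagFace_apply]
    split <;> ring
  have h2 : N = N0.submatrix σ id := by
    ext i j
    simp [hN, hN0, Matrix.submatrix_apply]
  have h3 : N0.det = 1 := by
    rw [Matrix.det_of_lowerTriangular N0 ?_]
    · apply Finset.prod_eq_one
      intro i _
      simp [hN0]
    · intro i j hij
      have hlt : (i : ℕ) < (j : ℕ) := hij
      simp only [hN0, Matrix.of_apply, if_pos hlt]
  have h4 : N.det = (Equiv.Perm.sign σ : ℝ) := by
    rw [h2, Matrix.det_permute, h3, mul_one]
  rw [h1, h4]
  rw [abs_mul, abs_mul]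
  have h5 : |∏ i, sgn s i| = 1 := by
    rw [Finset.abs_prod]
    apply Finset.prod_eq_one
    intro i _
    exact abs_sgn s i
  have h6 : |((Equiv.Perm.sign σ : ℤ) : ℝ)| = 1 := by
    rcases Int.units_eq_one_or (Equiv.Perm.sign σ) with h | h <;> simp [h]
  rw [h5, h6, one_mul, mul_one]
  rw [abs_of_nonneg (Finset.prod_nonneg fun j _ => hβ j)]

lemma simplex_nullMeasurable (S : Set (E n)) (hS : S.Finite) :
    NullMeasurableSet (convexHull ℝ S) (volume : Measure (E n)) :=
  (hS.isCompact_convexHull ℝ |>.isClosed.measurableSet).nullMeasurableSet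

lemma star_volume (β : Face n → ℝ) (hβ : ∀ F, 0 < β F) :
    volume (starPoly fun F => β F • ctr F)
      = ∑ p : (Fin n → Bool) × Equiv.Perm (Fin n),
          ENNReal.ofReal (∏ j, β (flagFace p.1 p.2 j)) * volume (Δ n) := by
  have hQ : starPoly (fun F => β F • ctr F)
      = ⋃ p : (Fin n → Bool) × Equiv.Perm (Fin n),
          convexHull ℝ (insert 0 (Set.range fun j =>
            β (flagFace p.1 p.2 j) • ctr (flagFace p.1 p.2 j))) := by
    rw [starPoly]
    exact (Set.iUnion_prod' fun p => convexHull ℝ (insert 0 (Set.range fun j =>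
      β (flagFace p.1 p.2 j) • ctr (flagFace p.1 p.2 j)))).symm
  rw [hQ, measure_iUnion₀, tsum_fintype]
  · exact Finset.sum_congr rfl fun p _ =>
      volume_flag_simplex p.1 p.2 _ fun j => (hβ _).le
  · intro p q hpq
    have hp := simplex_subset_cone p.1 p.2 (fun j => β (flagFace p.1 p.2 j))
      (fun j => (hβ _).le)
    have hq := simplex_subset_cone q.1 q.2 (fun j => β (flagFace q.1 q.2 j))
      (fun j => (hβ _).le)
    exact measure_mono_null (Set.inter_subset_inter hp hq) (cone_inter_null hpq)
  · intro p
    exact simplex_nullMeasurable _ ((Set.finite_range _).insert 0)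

end FlagAux

namespace FlagAux

variable {n : ℕ}

lemma cube_subset_star (hn : 1 ≤ n) :
    {x : E n | ∀ i, |x i| ≤ 1} ⊆ starPoly (fun F : Face n => (1 : ℝ) • ctr F) := by
  intro x hx
  classical
  set s : Fin n → Bool := fun i => decide (0 ≤ x i) with hs
  set τ : Equiv.Perm (Fin n) := Tuple.sort (fun i => |x i|) with hτ
  set σ : Equiv.Perm (Fin n) := τ⁻¹ with hσ
  set w : ℕ → ℝ := fun k => if h : k < n then |x (τ ⟨k, h⟩)| else 1 with hw
  set W : ℕ → ℝ := fun k => Nat.rec 0 (fun k _ => w k) k with hW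
  have hW0 : W 0 = 0 := rfl
  have hWsucc : ∀ k, W (k + 1) = w k := fun k => rfl
  set u' : ℕ → ℝ := fun k => W (k + 1) - W k with hu'
  set u : E n := WithLp.toLp 2 (fun j : Fin n => u' j : Fin n → ℝ) with hu
  have hu'eq : ∀ k, u' k = W (k + 1) - W k := fun k => rfl
  have hueq : ∀ j : Fin n, u j = u' (j : ℕ) := fun j => rfl
  have hweq : ∀ k (h : k < n), w k = |x (τ ⟨k, h⟩)| := by
    intro k h
    simp only [hw]
    rw [dif_pos h]
  have hu'nonneg : ∀ k, k < n → 0 ≤ u' k := by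
    intro k hk
    cases k with
    | zero =>
      rw [hu'eq, hWsucc, hW0, sub_zero, hweq 0 hk]
      positivity
    | succ m =>
      have hm : m < n := Nat.lt_of_succ_lt hk
      rw [hu'eq, hWsucc, hWsucc, sub_nonneg, hweq m hm, hweq (m + 1) hk]
      have := Tuple.monotone_sort (fun i => |x i|)
        (a := ⟨m, hm⟩) (b := ⟨m + 1, hk⟩) (by simp [Fin.le_def])
      simpa [hτ] using this
  have hsum : ∑ j : Fin n, u j ≤ 1 := by
    have h1 : ∑ j : Fin n, u j = ∑ k ∈ Finset.range n, u' k := by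
      rw [Finset.sum_congr rfl fun j _ => hueq j]
      exact Fin.sum_univ_eq_sum_range (fun k => u' k) n
    have h2 : ∑ k ∈ Finset.range n, u' k = W n - W 0 := by
      rw [Finset.sum_congr rfl fun k _ => hu'eq k]
      exact Finset.sum_range_sub W n
    rw [h1, h2, hW0, sub_zero]
    obtain ⟨m, rfl⟩ : ∃ m, n = m + 1 := ⟨n - 1, (Nat.succ_pred_eq_of_pos hn).symm⟩
    rw [hWsucc, hweq m (Nat.lt_succ_self m)]
    exact hx _
  have h0 : ∀ j : Fin n, 0 ≤ u j := fun j => hu'nonneg j j.isLt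
  rw [starPoly]
  refine Set.mem_iUnion.2 ⟨s, ?_⟩
  refine Set.mem_iUnion.2 ⟨σ, ?_⟩
  rw [← image_Δ (fun j => (1 : ℝ) • ctr (flagFace s σ j))]
  refine ⟨u, corner_mem_Δ u h0 hsum, ?_⟩
  apply PiLp.ext
  intro i
  rw [mapOf_apply]
  have hvi : ∀ j : Fin n, u j * ((1 : ℝ) • ctr (flagFace s σ j)) i
      = if ((σ i : ℕ) < (j : ℕ)) then 0 else u' (j : ℕ) * sgn s i := by
    intro j
    rw [one_smul, ctr_flagFace_apply]
    split
    · ring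
    · rw [hueq]
  rw [Finset.sum_congr rfl fun j _ => hvi j]
  set K : ℕ := (σ i : ℕ) with hK
  have hKn : K < n := (σ i).isLt
  have h2 : ∑ j : Fin n, (if (K < (j : ℕ)) then (0:ℝ) else u' (j : ℕ) * sgn s i)
      = ∑ k ∈ Finset.range n, (if K < k then (0:ℝ) else u' k * sgn s i) :=
    Fin.sum_univ_eq_sum_range (fun k => if K < k then (0:ℝ) else u' k * sgn s i) n
  rw [h2]
  have e1 : ∑ k ∈ Finset.range (K + 1), (if K < k then (0:ℝ) else u' k * sgn s i)
      = ∑ k ∈ Finset.range n, (if K < k then (0:ℝ) else u' k * sgn s i) := by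
    apply Finset.sum_subset (Finset.range_subset_range.2 (Nat.succ_le_of_lt hKn))
    intro k _ hnk
    have hKk : K < k := by
      simp only [Finset.mem_range] at hnk
      omega
    exact if_pos hKk
  rw [← e1]
  have e2 : ∑ k ∈ Finset.range (K + 1), (if K < k then (0:ℝ) else u' k * sgn s i)
      = ∑ k ∈ Finset.range (K + 1), u' k * sgn s i := by
    apply Finset.sum_congr rfl
    intro k hk
    exact if_neg (not_lt.2 (Nat.lt_succ_iff.1 (Finset.mem_range.1 hk)))
  rw [e2, ← Finset.sum_mul]
  have e3 : ∑ k ∈ Finset.range (K + 1), u' k = w K := by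
    rw [Finset.sum_congr rfl fun k _ => hu'eq k]
    rw [Finset.sum_range_sub W (K + 1), hW0, sub_zero, hWsucc]
  have hτσ : τ ⟨K, hKn⟩ = i := by
    have h5 : (⟨K, hKn⟩ : Fin n) = σ i := rfl
    rw [h5, hσ]
    exact Equiv.apply_symm_apply τ i
  rw [e3, hweq K hKn, hτσ]
  by_cases hxi : 0 ≤ x i
  · rw [abs_of_nonneg hxi]
    have hse : sgn s i = 1 := by simp [sgn, hs, hxi]
    rw [hse, mul_one]
  · rw [abs_of_neg (not_le.1 hxi)]
    have hse : sgn s i = -1 := by simp [sgn, hs, hxi]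
    rw [hse]
    ring

lemma volume_cube : volume {x : E n | ∀ i, |x i| ≤ 1} = 2 ^ n := by
  have hmp := EuclideanSpace.volume_preserving_symm_measurableEquiv_toLp (Fin n)
  have hset : {x : E n | ∀ i, |x i| ≤ 1}
      = (MeasurableEquiv.toLp 2 (Fin n → ℝ)).symm ⁻¹'
        (Set.univ.pi fun _ => Set.Icc (-1 : ℝ) 1) := by
    ext x
    simp only [Set.mem_setOf_eq, Set.mem_preimage, Set.mem_pi, Set.mem_univ, forall_true_left,
      Set.mem_Icc, true_implies]
    constructor
    · intro h i; exact abs_le.1 (h i)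
    · intro h i; exact abs_le.2 (h i)
  rw [hset, hmp.measure_preimage
    (MeasurableSet.univ_pi fun _ => measurableSet_Icc).nullMeasurableSet]
  rw [volume_pi_pi]
  have : ∀ _i : Fin n, volume (Set.Icc (-1 : ℝ) 1) = 2 := by
    intro i
    rw [Real.volume_Icc]
    norm_num
  rw [Finset.prod_congr rfl fun i _ => this i, Finset.prod_const, Finset.card_univ,
    Fintype.card_fin]

lemma volume_Δ_lower (hn : 1 ≤ n) :
    ((n.factorial : ℝ≥0∞))⁻¹ ≤ volume (Δ n) := by
  have h1 : volume {x : E n | ∀ i, |x i| ≤ 1}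
      ≤ volume (starPoly fun F : Face n => (1 : ℝ) • ctr F) :=
    measure_mono (cube_subset_star hn)
  rw [volume_cube, star_volume (fun _ => (1 : ℝ)) (fun _ => one_pos)] at h1
  simp only [Finset.prod_const_one, ENNReal.ofReal_one, one_mul] at h1
  rw [Finset.sum_const, Finset.card_univ] at h1
  have hcard : Fintype.card ((Fin n → Bool) × Equiv.Perm (Fin n)) = 2 ^ n * n.factorial := by
    simp [Fintype.card_prod, Fintype.card_perm, Fintype.card_fun]
  rw [hcard, nsmul_eq_mul] at h1
  push_cast at h1
  rw [mul_assoc] at h1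
  have hne : (2 : ℝ≥0∞) ^ n ≠ 0 := by positivity
  have hnt : (2 : ℝ≥0∞) ^ n ≠ ⊤ := ENNReal.pow_ne_top (by norm_num)
  have h2 : (1 : ℝ≥0∞) ≤ (n.factorial : ℝ≥0∞) * volume (Δ n) := by
    calc (1 : ℝ≥0∞) = (2:ℝ≥0∞)^n * ((2:ℝ≥0∞)^n)⁻¹ := (ENNReal.mul_inv_cancel hne hnt).symm
      _ ≤ ((2:ℝ≥0∞)^n * ((n.factorial : ℝ≥0∞) * volume (Δ n))) * ((2:ℝ≥0∞)^n)⁻¹ :=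
          mul_le_mul_left h1 _
      _ = (n.factorial : ℝ≥0∞) * volume (Δ n) := by
          rw [mul_comm ((2:ℝ≥0∞)^n), mul_assoc, ENNReal.mul_inv_cancel hne hnt, mul_one]
  have hfne : (n.factorial : ℝ≥0∞) ≠ 0 := by exact_mod_cast Nat.factorial_ne_zero n
  have hfnt : (n.factorial : ℝ≥0∞) ≠ ⊤ := ENNReal.natCast_ne_top _
  calc ((n.factorial : ℝ≥0∞))⁻¹ = ((n.factorial : ℝ≥0∞))⁻¹ * 1 := (mul_one _).symm
    _ ≤ ((n.factorial : ℝ≥0∞))⁻¹ * ((n.factorial : ℝ≥0∞) * volume (Δ n)) := by gcongr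
    _ = volume (Δ n) := by
        rw [← mul_assoc, ENNReal.inv_mul_cancel hfne hfnt, one_mul]

end FlagAux

namespace FlagAux

variable {n : ℕ}

lemma flagVec_eq_zero_iff (s : Fin n → Bool) (σ : Equiv.Perm (Fin n)) (j i : Fin n) :
    flagVec s σ j i = 0 ↔ (σ i : ℕ) < (j : ℕ) := by
  unfold flagVec
  split
  · simpa
  · rename_i h
    simp only [h, iff_false]
    split <;> simp

lemma faceDim_flagFace (s : Fin n → Bool) (σ : Equiv.Perm (Fin n)) (j : Fin n) :
    faceDim (flagFace s σ j) = (j : ℕ) := by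
  unfold faceDim flagFace
  have h1 : (Finset.univ.filter fun i => flagVec s σ j i = 0)
      = (Finset.univ.filter fun k : Fin n => (k : ℕ) < (j : ℕ)).map σ.symm.toEmbedding := by
    ext i
    simp only [Finset.mem_filter, Finset.mem_univ, true_and, Finset.mem_map,
      Equiv.coe_toEmbedding, flagVec_eq_zero_iff]
    constructor
    · intro h
      exact ⟨σ i, by simpa using h, Equiv.symm_apply_apply σ (i)⟩
    · rintro ⟨k, hk, rfl⟩
      simpa using hk
  rw [h1, Finset.card_map]
  have h2 : (Finset.univ.filter fun k : Fin n => (k : ℕ) < (j : ℕ)) = Finset.Iio j := by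
    ext k
    simp only [Finset.mem_filter, Finset.mem_univ, true_and, Finset.mem_Iio]
    exact (Fin.lt_def).symm
  rw [h2, Fin.card_Iio]

lemma faceDim_lt (hn : 1 ≤ n) (F : Face n) : faceDim F < n := by
  obtain ⟨i, hi⟩ := Function.ne_iff.1 F.2
  have h1 : (Finset.univ.filter fun i => F.1 i = 0) ⊂ Finset.univ := by
    rw [Finset.filter_ssubset]
    exact ⟨i, Finset.mem_univ i, hi⟩
  have := Finset.card_lt_card h1
  simpa [faceDim, Finset.card_univ] using this

lemma prod_range_sub_fact : ∀ m : ℕ, ∏ j ∈ Finset.range m, (m - j) = m.factorial := by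
  intro m
  induction m with
  | zero => simp
  | succ k ih =>
    rw [Finset.prod_range_succ']
    simp only [Nat.succ_sub_succ_eq_sub, Nat.sub_zero]
    rw [ih, Nat.factorial_succ, mul_comm]

lemma prod_fin_sub_fact : (∏ j : Fin n, ((n - (j : ℕ) : ℕ) : ℝ)) = (n.factorial : ℝ) := by
  rw [Fin.prod_univ_eq_prod_range (fun k => ((n - k : ℕ) : ℝ)) n]
  rw [← Nat.cast_prod]
  rw [prod_range_sub_fact n]

lemma cs_aux {ι : Type*} [Fintype ι] (a : ι → ℝ) (ha : ∀ p, 0 < a p) :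
    (Fintype.card ι : ℝ) ^ 2 ≤ (∑ p, a p) * ∑ p, (a p)⁻¹ := by
  have h := Finset.sum_mul_sq_le_sq_mul_sq Finset.univ
    (fun p => Real.sqrt (a p)) (fun p => Real.sqrt ((a p)⁻¹))
  have e1 : ∀ p : ι, Real.sqrt (a p) * Real.sqrt ((a p)⁻¹) = 1 := by
    intro p
    rw [← Real.sqrt_mul (ha p).le, mul_inv_cancel₀ (ha p).ne', Real.sqrt_one]
  have e2 : ∀ p : ι, Real.sqrt (a p) ^ 2 = a p := fun p => Real.sq_sqrt (ha p).le
  have e3 : ∀ p : ι, Real.sqrt ((a p)⁻¹) ^ 2 = (a p)⁻¹ :=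
    fun p => Real.sq_sqrt (inv_nonneg.2 (ha p).le)
  rw [Finset.sum_congr rfl fun p _ => e1 p, Finset.sum_congr rfl fun p _ => e2 p,
    Finset.sum_congr rfl fun p _ => e3 p, Finset.sum_const, Finset.card_univ,
    nsmul_eq_mul, mul_one] at h
  exact h

end FlagAux


open FlagAux

/-- Lemma 7: for any positive weights `α_F` with `y_F = α_F·c_F` and
`y*_F = α_F⁻¹·c_F/(n − dim F)`, the polytopes `Q = ⋃_𝔽 conv{0, y_{F₀}, …, y_{F_{n−1}}}`
and `Q' = ⋃_𝔽 conv{0, y*_{F₀}, …, y*_{F_{n−1}}}` satisfy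
`volₙ(Q)·volₙ(Q') ≥ 4ⁿ/n!`. -/
theorem vol_product_flag_polytopes (n : ℕ) (hn : 1 ≤ n)
    (α : Face n → ℝ) (hα : ∀ F, 0 < α F) :
    volume (starPoly fun F => α F • ctr F) *
        volume (starPoly fun F => (α F)⁻¹ • (((n - faceDim F : ℕ) : ℝ)⁻¹ • ctr F)) ≥
      (4 : ℝ≥0∞) ^ n / (n.factorial : ℝ≥0∞) := by
  classical
  set V := volume (Δ n) with hV
  set β' : Face n → ℝ := fun F => (α F)⁻¹ * ((n - faceDim F : ℕ) : ℝ)⁻¹ with hβ'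
  have hβ'pos : ∀ F, 0 < β' F := by
    intro F
    apply mul_pos (inv_pos.2 (hα F))
    apply inv_pos.2
    have : 0 < n - faceDim F := Nat.sub_pos_of_lt (faceDim_lt hn F)
    exact_mod_cast this
  have hQ'eq : (fun F : Face n => (α F)⁻¹ • (((n - faceDim F : ℕ) : ℝ)⁻¹ • ctr F))
      = fun F => β' F • ctr F := by
    funext F
    rw [smul_smul]
  rw [hQ'eq]
  rw [star_volume α hα, star_volume β' hβ'pos]
  set a : (Fin n → Bool) × Equiv.Perm (Fin n) → ℝ :=
    fun p => ∏ j, α (flagFace p.1 p.2 j) with ha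
  have hapos : ∀ p, 0 < a p := fun p => Finset.prod_pos fun j _ => hα _
  have hb : ∀ p : (Fin n → Bool) × Equiv.Perm (Fin n),
      (∏ j, β' (flagFace p.1 p.2 j)) = (n.factorial : ℝ)⁻¹ * (a p)⁻¹ := by
    intro p
    have e : ∀ j : Fin n, β' (flagFace p.1 p.2 j)
        = (α (flagFace p.1 p.2 j))⁻¹ * (((n - (j : ℕ) : ℕ)) : ℝ)⁻¹ := by
      intro j
      rw [hβ']
      simp only []
      rw [faceDim_flagFace]
    rw [Finset.prod_congr rfl fun j _ => e j, Finset.prod_mul_distrib,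
      Finset.prod_inv_distrib, Finset.prod_inv_distrib, prod_fin_sub_fact, mul_comm]
  set A : ℝ := ∑ p, a p with hA
  set B : ℝ := ∑ p : (Fin n → Bool) × Equiv.Perm (Fin n), (n.factorial : ℝ)⁻¹ * (a p)⁻¹ with hB
  have hAnn : 0 ≤ A := Finset.sum_nonneg fun p _ => (hapos p).le
  have hBnn : 0 ≤ B := Finset.sum_nonneg fun p _ =>
    le_of_lt (mul_pos (inv_pos.2 (by exact_mod_cast Nat.factorial_pos n)) (inv_pos.2 (hapos p)))
  have hQ : (∑ p : (Fin n → Bool) × Equiv.Perm (Fin n),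
      ENNReal.ofReal (a p) * V) = ENNReal.ofReal A * V := by
    rw [← Finset.sum_mul, ← ENNReal.ofReal_sum_of_nonneg fun p _ => (hapos p).le]
  have hQ' : (∑ p : (Fin n → Bool) × Equiv.Perm (Fin n),
      ENNReal.ofReal (∏ j, β' (flagFace p.1 p.2 j)) * V) = ENNReal.ofReal B * V := by
    rw [← Finset.sum_mul, ← ENNReal.ofReal_sum_of_nonneg fun p _ =>
      le_of_lt (Finset.prod_pos fun j _ => hβ'pos _)]
    congr 2
    rw [Finset.sum_congr rfl fun p _ => hb p]
  rw [hQ, hQ']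
  -- real inequality
  have hcard : (Fintype.card ((Fin n → Bool) × Equiv.Perm (Fin n)) : ℝ)
      = 2 ^ n * n.factorial := by
    rw [Fintype.card_prod, Fintype.card_perm, Fintype.card_fun]
    push_cast
    simp
  have hfne : (n.factorial : ℝ) ≠ 0 := Nat.cast_ne_zero.2 (Nat.factorial_ne_zero n)
  have hAB : 4 ^ n * (n.factorial : ℝ) ≤ A * B := by
    have h1 := cs_aux a hapos
    rw [hcard] at h1
    have h2 : B = (n.factorial : ℝ)⁻¹ * ∑ p, (a p)⁻¹ := by
      rw [hB, Finset.mul_sum]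
    calc (4:ℝ) ^ n * (n.factorial : ℝ)
        = (n.factorial : ℝ)⁻¹ * ((2:ℝ) ^ n * n.factorial) ^ 2 := by
          have e4 : ((2:ℝ) ^ n) ^ 2 = 4 ^ n := by
            rw [← pow_mul, mul_comm n 2, pow_mul]
            norm_num
          rw [mul_pow, e4]
          field_simp
      _ ≤ (n.factorial : ℝ)⁻¹ * (A * ∑ p, (a p)⁻¹) := by
          apply mul_le_mul_of_nonneg_left h1 (by positivity)
      _ = A * B := by rw [h2]; ring
  -- ENNReal endgame
  have hfENN0 : (n.factorial : ℝ≥0∞) ≠ 0 := by exact_mod_cast Nat.factorial_ne_zero n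
  have hfENNt : (n.factorial : ℝ≥0∞) ≠ ⊤ := ENNReal.natCast_ne_top _
  have hVlow : ((n.factorial : ℝ≥0∞))⁻¹ ≤ V := volume_Δ_lower hn
  have key : ENNReal.ofReal (A * B) * (((n.factorial : ℝ≥0∞))⁻¹ * ((n.factorial : ℝ≥0∞))⁻¹)
      ≤ ENNReal.ofReal A * V * (ENNReal.ofReal B * V) := by
    rw [ENNReal.ofReal_mul hAnn]
    calc ENNReal.ofReal A * ENNReal.ofReal B
          * (((n.factorial : ℝ≥0∞))⁻¹ * ((n.factorial : ℝ≥0∞))⁻¹)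
        ≤ ENNReal.ofReal A * ENNReal.ofReal B * (V * V) := by
          exact mul_le_mul_right (mul_le_mul' hVlow hVlow) _
      _ = ENNReal.ofReal A * V * (ENNReal.ofReal B * V) := by ring
  refine le_trans ?_ key
  have hlow : (4:ℝ≥0∞) ^ n * (n.factorial : ℝ≥0∞) ≤ ENNReal.ofReal (A * B) := by
    have : ENNReal.ofReal ((4:ℝ) ^ n * (n.factorial : ℝ)) ≤ ENNReal.ofReal (A * B) :=
      ENNReal.ofReal_le_ofReal hAB
    calc (4:ℝ≥0∞) ^ n * (n.factorial : ℝ≥0∞)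
        = ENNReal.ofReal ((4:ℝ) ^ n * (n.factorial : ℝ)) := by
          rw [ENNReal.ofReal_mul (by positivity), ENNReal.ofReal_pow (by norm_num),
            ENNReal.ofReal_natCast]
          norm_num
      _ ≤ ENNReal.ofReal (A * B) := this
  calc (4:ℝ≥0∞) ^ n / (n.factorial : ℝ≥0∞)
      = ((4:ℝ≥0∞) ^ n * (n.factorial : ℝ≥0∞))
        * (((n.factorial : ℝ≥0∞))⁻¹ * ((n.factorial : ℝ≥0∞))⁻¹) := by
        rw [div_eq_mul_inv]
        rw [mul_assoc, ← mul_assoc (n.factorial : ℝ≥0∞), ENNReal.mul_inv_cancel hfENN0 hfENNt,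
          one_mul]
    _ ≤ ENNReal.ofReal (A * B) * (((n.factorial : ℝ≥0∞))⁻¹ * ((n.factorial : ℝ≥0∞))⁻¹) :=
        mul_le_mul_left hlow _
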